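/- Let β₁, β₂ > 0 be real numbers satisfying ν₀(β₁ + β₂ν₁) ≥ √2, where ν₀ = √(1 − sin²1) and ν₁ = −sin 2/(1 + cos 2). Let p be analytic on the open unit disk 𝔻 with p(0) = 1, and suppose that for every z ∈ 𝔻 the value 1 + β₁·z·p′(z) + β₂·z²·p″(z) lies in the set {w ∈ ℂ : |w² − 1| < 2|w|}. Then for every z ∈ 𝔻, p(z) ∈ {1 + sin w : w ∈ 𝔻}, i.e. p(z) ≺ 1 + sin z. -/

import Mathlib

open Metric Complex Set

noncomputable def Complex.abs : AbsoluteValue ℂ ℝ := NormedField.toAbsoluteValue ℂ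

@[simp] lemma Complex.abs_apply (z : ℂ) : Complex.abs z = ‖z‖ := rfl

lemma Complex.norm_eq_abs (z : ℂ) : ‖z‖ = Complex.abs z := rfl

lemma Complex.abs_exp (z : ℂ) : Complex.abs (Complex.exp z) = Real.exp z.re := Complex.norm_exp z

lemma Complex.abs_ofReal (r : ℝ) : Complex.abs (r : ℂ) = |r| := Complex.norm_real r

lemma Complex.abs_two : Complex.abs 2 = 2 := Complex.norm_two

lemma Complex.re_le_abs (z : ℂ) : z.re ≤ Complex.abs z := Complex.re_le_norm z

lemma Complex.abs_re_le_abs (z : ℂ) : |z.re| ≤ Complex.abs z := Complex.abs_re_le_norm z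

lemma Complex.abs_le_abs_of_mapsTo_ball_self {f : ℂ → ℂ} {R : ℝ} {z : ℂ}
    (hd : DifferentiableOn ℂ f (ball 0 R)) (h_maps : MapsTo f (ball 0 R) (ball 0 R))
    (h₀ : f 0 = 0) (hz : Complex.abs z < R) : Complex.abs (f z) ≤ Complex.abs z :=
  norm_le_norm_of_mapsTo_ball hd (h_maps.mono_right ball_subset_closedBall) h₀ hz


lemma div2_im (z : ℂ) : (z / 2).im = z.im / 2 := by
  have : z / 2 = z * (1/2 : ℝ) := by push_cast; ring
  rw [this, Complex.mul_im]
  simp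
  ring

lemma re_exp_half_log_nonneg (x : ℂ) : 0 ≤ (Complex.exp (Complex.log x / 2)).re := by
  rw [Complex.exp_re]
  apply mul_nonneg (Real.exp_pos _).le
  apply Real.cos_nonneg_of_mem_Icc
  rw [div2_im, Complex.log_im]
  have := Complex.abs_arg_le_pi x
  rw [abs_le] at this
  constructor <;> [linarith [this.1]; linarith [this.2]]

lemma exp_half_log_sq {x : ℂ} (hx : x ≠ 0) :
    (Complex.exp (Complex.log x / 2)) ^ 2 = x := by
  rw [sq, ← Complex.exp_add, add_halves]
  exact Complex.exp_log hx

lemma abs_exp_neg_half_log {x : ℂ} (hx : x ≠ 0) :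
    Complex.abs (Complex.exp (-(Complex.log x / 2))) = 1 / Real.sqrt (Complex.abs x) := by
  rw [Complex.abs_exp]
  have h1 : (-(Complex.log x / 2)).re = -(Real.log (Complex.abs x) / 2) := by
    rw [Complex.neg_re]
    congr 1
    have : Complex.log x / 2 = Complex.log x * (1/2 : ℝ) := by push_cast; ring
    rw [this, Complex.mul_re]
    simp [Complex.log_re]
    ring
  rw [h1]
  have h : 0 < Complex.abs x := Complex.abs.pos hx
  rw [Real.exp_neg, ← Real.log_sqrt (Complex.abs.nonneg x), Real.exp_log (Real.sqrt_pos.2 h),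
      one_div]

lemma sin_onto {v : ℂ} (hv : Complex.abs v < Real.sqrt 2 / 2) :
    ∃ w ∈ ball (0:ℂ) 1, Complex.sin w = v := by
  set m := Complex.abs v with hm
  have hm0 : 0 ≤ m := Complex.abs.nonneg v
  have hm2 : m ^ 2 < 1 / 2 := by
    have h2 : (Real.sqrt 2 / 2) ^ 2 = 1 / 2 := by
      rw [div_pow, Real.sq_sqrt (by norm_num : (0:ℝ) ≤ 2)]
      norm_num
    calc m ^ 2 < (Real.sqrt 2 / 2) ^ 2 := by
          apply pow_lt_pow_left₀ hv hm0 (by norm_num)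
      _ = 1 / 2 := h2
  set g : ℝ → ℂ := fun t => 1 - (t:ℂ) ^ 2 * v ^ 2 with hgdef
  have habs_t2v2 : ∀ t : ℝ, Complex.abs ((t:ℂ) ^ 2 * v ^ 2) = t ^ 2 * m ^ 2 := by
    intro t
    rw [map_mul, map_pow, map_pow, Complex.abs_ofReal, _root_.sq_abs]
  have hre2 : ∀ t : ℝ, |t| ≤ 1 → ((t:ℂ) ^ 2 * v ^ 2).re ≤ m ^ 2 := by
    intro t ht
    have h3 : t ^ 2 ≤ 1 := by nlinarith [abs_nonneg t, _root_.sq_abs t]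
    calc ((t:ℂ) ^ 2 * v ^ 2).re ≤ Complex.abs ((t:ℂ) ^ 2 * v ^ 2) := Complex.re_le_abs _
      _ = t ^ 2 * m ^ 2 := habs_t2v2 t
      _ ≤ m ^ 2 := by nlinarith
  have hgre : ∀ t : ℝ, |t| ≤ 1 → 1 / 2 < (g t).re := by
    intro t ht
    have h1 : (g t).re = 1 - ((t:ℂ) ^ 2 * v ^ 2).re := by simp [hgdef]
    have := hre2 t ht
    rw [h1]; linarith
  have hgslit : ∀ t : ℝ, |t| ≤ 1 → g t ∈ Complex.slitPlane := by
    intro t ht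
    rw [Complex.mem_slitPlane_iff]
    left; linarith [hgre t ht]
  have hgne : ∀ t : ℝ, |t| ≤ 1 → g t ≠ 0 := fun t ht => Complex.slitPlane_ne_zero (hgslit t ht)
  have habsg : ∀ t : ℝ, |t| ≤ 1 → 1 - m ^ 2 ≤ Complex.abs (g t) := by
    intro t ht
    have h3 : t ^ 2 ≤ 1 := by nlinarith [abs_nonneg t, _root_.sq_abs t]
    have h4 := Complex.re_le_abs (g t)
    have h1 : (g t).re = 1 - ((t:ℂ) ^ 2 * v ^ 2).re := by simp [hgdef]
    have h2 : ((t:ℂ) ^ 2 * v ^ 2).re ≤ t ^ 2 * m ^ 2 := by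
      calc ((t:ℂ) ^ 2 * v ^ 2).re ≤ Complex.abs ((t:ℂ) ^ 2 * v ^ 2) := Complex.re_le_abs _
        _ = t ^ 2 * m ^ 2 := habs_t2v2 t
    nlinarith [Complex.abs.nonneg (g t)]
  -- clamp function
  set cl : ℝ → ℝ := fun t => max 0 (min t 1) with hcldef
  have hclcont : Continuous cl := continuous_const.max (continuous_id.min continuous_const)
  have hclabs : ∀ t : ℝ, |cl t| ≤ 1 := by
    intro t
    rw [abs_le]
    constructor
    · simp [hcldef]
    · simp [hcldef]
  have hcleq : ∀ t ∈ Icc (0:ℝ) 1, cl t = t := by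
    intro t ht
    simp only [hcldef]
    rw [min_eq_left ht.2, max_eq_right ht.1]
  -- the integrand
  set A : ℝ → ℂ := fun t => v * Complex.exp (-(Complex.log (g (cl t)) / 2)) with hAdef
  have hgcont : Continuous g := by
    apply continuous_const.sub
    exact (continuous_ofReal.pow 2).mul continuous_const
  have hAcont : Continuous A := by
    have hgcl : Continuous fun t : ℝ => g (cl t) := hgcont.comp hclcont
    have hlogc : Continuous fun t : ℝ => Complex.log (g (cl t)) := by
      rw [continuous_iff_continuousAt]
      intro t
      exact ContinuousAt.comp (f := fun t : ℝ => g (cl t)) (x := t)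
        (continuousAt_clog (hgslit _ (hclabs t))) hgcl.continuousAt
    exact continuous_const.mul (Complex.continuous_exp.comp ((hlogc.div_const 2).neg))
  set W : ℝ → ℂ := fun τ => ∫ t in (0:ℝ)..τ, A t with hWdef
  have hWd : ∀ τ : ℝ, HasDerivAt W (A τ) τ := by
    intro τ
    exact intervalIntegral.integral_hasDerivAt_right (hAcont.intervalIntegrable _ _)
      (hAcont.stronglyMeasurableAtFilter _ _) hAcont.continuousAt
  set Sq : ℝ → ℂ := fun t => Complex.exp (Complex.log (g t) / 2) with hSqdef
  set Φ : ℝ → ℂ := fun τ => (Sq τ + (τ:ℂ) * v * Complex.I) * Complex.exp (-(Complex.I * W τ))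
    with hΦdef
  have hΦd : ∀ τ ∈ Set.uIcc (0:ℝ) 1, HasDerivAt Φ ((fun _ => (0:ℂ)) τ) τ := by
    intro τ hτ
    rw [Set.uIcc_of_le (by norm_num : (0:ℝ) ≤ 1)] at hτ
    have hτabs : |τ| ≤ 1 := by
      rw [abs_le]; exact ⟨by linarith [hτ.1], hτ.2⟩
    have hid : HasDerivAt (fun t : ℝ => (t:ℂ)) 1 τ := by
      simpa using (hasDerivAt_id τ).ofReal_comp
    have hsq2 : HasDerivAt (fun t : ℝ => ((t:ℂ)) ^ 2) (2 * (τ:ℂ)) τ := by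
      have e1 : (fun t : ℝ => ((t:ℂ)) ^ 2) = fun t : ℝ => (t:ℂ) * (t:ℂ) := by
        funext t; ring
      rw [e1]
      convert hid.mul hid using 1 <;> first | rfl | ring
    have hgd : HasDerivAt g (-(2 * (τ:ℂ) * v ^ 2)) τ := by
      exact (hsq2.mul_const (v ^ 2)).const_sub 1
    have hlogd : HasDerivAt (fun t => Complex.log (g t)) (-(2 * (τ:ℂ) * v ^ 2) / g τ) τ :=
      hgd.clog_real (hgslit τ hτabs)
    have hSqd : HasDerivAt Sq (Sq τ * (-(2 * (τ:ℂ) * v ^ 2) / g τ / 2)) τ := by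
      have := (hlogd.div_const 2).cexp
      simpa [hSqdef, mul_comm] using this
    have hWτ := hWd τ
    have hexpd : HasDerivAt (fun τ => Complex.exp (-(Complex.I * W τ)))
        (Complex.exp (-(Complex.I * W τ)) * (-(Complex.I * A τ))) τ := by
      have := (((hWd τ).const_mul Complex.I).neg).cexp
      simpa [mul_comm] using this
    have hlin : HasDerivAt (fun τ : ℝ => (τ:ℂ) * v * Complex.I) (v * Complex.I) τ := by
      have := (hid.mul_const v).mul_const Complex.I
      simpa using this
    have htot := (hSqd.add hlin).mul hexpd
    convert htot using 1
    case e'_4 => rfl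
    case e'_8 => rfl
    -- show 0 = derivative
    have hS2 : Sq τ ^ 2 = g τ := exp_half_log_sq (hgne τ hτabs)
    have hSne : Sq τ ≠ 0 := Complex.exp_ne_zero _
    have hAτ : A τ = v / Sq τ := by
      have h1 : cl τ = τ := hcleq τ hτ
      show v * Complex.exp (-(Complex.log (g (cl τ)) / 2)) = v / Sq τ
      rw [h1, Complex.exp_neg]
      rfl
    rw [hAτ, ← hS2]
    have hEne : Complex.exp (-(Complex.I * W τ)) ≠ 0 := Complex.exp_ne_zero _
    field_simp
    simp only [Pi.add_apply]
    linear_combination ((τ:ℂ) * v ^ 2 * Complex.exp (-(Complex.I * W τ))) *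
      Complex.I_sq
  have hint : ∫ τ in (0:ℝ)..1, (fun _ => (0:ℂ)) τ = Φ 1 - Φ 0 :=
    intervalIntegral.integral_eq_sub_of_hasDerivAt hΦd (intervalIntegrable_const)
  have hΦ0 : Φ 0 = 1 := by
    have hW0 : W 0 = 0 := intervalIntegral.integral_same
    have hg0 : g 0 = 1 := by simp [hgdef]
    simp [hΦdef, hW0, hSqdef, hg0, Complex.log_one]
  have hΦ1 : Φ 1 = 1 := by
    have : (0:ℂ) = Φ 1 - Φ 0 := by simpa using hint
    rw [hΦ0] at this
    linear_combination -this
  set w := W 1 with hwdef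
  have hS1 : Sq 1 ^ 2 = 1 - v ^ 2 := by
    have h := exp_half_log_sq (hgne 1 (by norm_num))
    have h2 : g 1 = 1 - v ^ 2 := by simp [hgdef]
    rw [← h2]
    exact h
  have hkey : (Sq 1 + v * Complex.I) * Complex.exp (-(Complex.I * w)) = 1 := by
    have := hΦ1
    simpa [hΦdef, hwdef] using this
  have hprod : (Sq 1 + v * Complex.I) * (Sq 1 - v * Complex.I) = 1 := by
    have : (Sq 1 + v * Complex.I) * (Sq 1 - v * Complex.I)
        = Sq 1 ^ 2 - (v * Complex.I) ^ 2 := by ring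
    rw [this, hS1]
    rw [mul_pow, Complex.I_sq]
    ring
  have hexpIw : Complex.exp (-(Complex.I * w)) = Sq 1 - v * Complex.I := by
    have hne : Sq 1 + v * Complex.I ≠ 0 := by
      intro h0
      rw [h0, zero_mul] at hkey
      exact one_ne_zero hkey.symm
    field_simp at hkey hprod ⊢
    rw [← hprod] at hkey
    exact mul_left_cancel₀ hne hkey
  have hexpIw' : Complex.exp (Complex.I * w) = Sq 1 + v * Complex.I := by
    have h1 : Complex.exp (Complex.I * w) * Complex.exp (-(Complex.I * w)) = 1 := by
      rw [← Complex.exp_add]; simp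
    rw [hexpIw] at h1
    calc Complex.exp (Complex.I * w)
        = Complex.exp (Complex.I * w) * ((Sq 1 - v * Complex.I) * (Sq 1 + v * Complex.I)) := by
          rw [mul_comm (Sq 1 - v * Complex.I), hprod, mul_one]
      _ = (Complex.exp (Complex.I * w) * (Sq 1 - v * Complex.I)) * (Sq 1 + v * Complex.I) := by
          ring
      _ = Sq 1 + v * Complex.I := by rw [h1, one_mul]
  have hsinw : Complex.sin w = v := by
    have h2 := Complex.two_sin (x := w)
    have hneg : -w * Complex.I = -(Complex.I * w) := by ring
    have hpos : w * Complex.I = Complex.I * w := by ring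
    rw [hneg, hpos, hexpIw, hexpIw'] at h2
    have h3 : 2 * Complex.sin w = 2 * v := by
      rw [h2]
      have h4 : Sq 1 - v * Complex.I - (Sq 1 + v * Complex.I) = -2 * v * Complex.I := by ring
      rw [h4]
      have h5 : -2 * v * Complex.I * Complex.I = -2 * v * (Complex.I * Complex.I) := by ring
      rw [h5, Complex.I_mul_I]
      ring
    exact mul_left_cancel₀ two_ne_zero h3
  refine ⟨w, ?_, hsinw⟩
  rw [mem_ball_zero_iff]
  have hCpos : 0 < Real.sqrt (1 - m ^ 2) := Real.sqrt_pos.2 (by linarith)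
  have hbound : ‖w‖ ≤ (m / Real.sqrt (1 - m ^ 2)) * |1 - 0| := by
    apply intervalIntegral.norm_integral_le_of_norm_le_const
    intro t ht
    rw [Set.uIoc_of_le (by norm_num : (0:ℝ) ≤ 1)] at ht
    have htabs : |t| ≤ 1 := by
      rw [abs_le]; exact ⟨by linarith [ht.1], ht.2⟩
    have hcleqt : cl t = t := hcleq t ⟨ht.1.le, ht.2⟩
    have hA : ‖A t‖ = m * (1 / Real.sqrt (Complex.abs (g t))) := by
      simp only [hAdef, hcleqt]
      rw [norm_mul, Complex.norm_eq_abs, Complex.norm_eq_abs,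
        abs_exp_neg_half_log (hgne t htabs)]
    rw [hA]
    have h1 : Real.sqrt (1 - m ^ 2) ≤ Real.sqrt (Complex.abs (g t)) :=
      Real.sqrt_le_sqrt (habsg t htabs)
    have h2 : 0 < Real.sqrt (Complex.abs (g t)) := lt_of_lt_of_le hCpos h1
    rw [mul_one_div]
    gcongr
  have hC1 : m / Real.sqrt (1 - m ^ 2) < 1 := by
    rw [div_lt_one hCpos]
    exact (Real.lt_sqrt hm0).2 (by linarith)
  calc ‖w‖ ≤ (m / Real.sqrt (1 - m ^ 2)) * |1 - 0| := hbound
    _ = m / Real.sqrt (1 - m ^ 2) := by norm_num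
    _ < 1 := hC1

lemma lune_bound {W : ℂ → ℂ} (hd : DifferentiableOn ℂ W (ball 0 1)) (hW0 : W 0 = 1)
    (hlune : ∀ z ∈ ball (0:ℂ) 1,
      Complex.abs ((W z) ^ 2 - 1) < 2 * Complex.abs (W z)) :
    ∀ z ∈ ball (0:ℂ) 1, Complex.abs (W z - 1) ≤ Complex.abs z + Complex.abs z ^ 2 := by
  have hWne : ∀ z ∈ ball (0:ℂ) 1, W z ≠ 0 := by
    intro z hz h0
    have := hlune z hz
    rw [h0] at this
    simp at this
    linarith
  set ω : ℂ → ℂ := fun z => ((W z) ^ 2 - 1) / (2 * W z) with hωdef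
  have hωlt : ∀ z ∈ ball (0:ℂ) 1, Complex.abs (ω z) < 1 := by
    intro z hz
    have hpos : 0 < 2 * Complex.abs (W z) := by
      have := Complex.abs.pos (hWne z hz); linarith
    rw [hωdef]
    simp only [map_div₀, map_mul, Complex.abs_two]
    rw [div_lt_one hpos]
    exact hlune z hz
  have hωd : DifferentiableOn ℂ ω (ball 0 1) := by
    apply DifferentiableOn.div
    · exact (hd.pow 2).sub (differentiableOn_const 1)
    · exact (differentiableOn_const 2).mul hd
    · intro z hz
      exact mul_ne_zero two_ne_zero (hWne z hz)
  have hω0 : ω 0 = 0 := by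
    rw [hωdef]; simp [hW0]
  have hsch : ∀ z ∈ ball (0:ℂ) 1, Complex.abs (ω z) ≤ Complex.abs z := by
    intro z hz
    apply Complex.abs_le_abs_of_mapsTo_ball_self hωd
    · intro x hx
      rw [mem_ball_zero_iff]
      exact hωlt x hx
    · exact hω0
    · exact mem_ball_zero_iff.1 hz
  set S : ℂ → ℂ := fun z => Complex.exp (Complex.log (1 + (ω z) ^ 2) / 2) with hSdef
  have hrepos : ∀ z ∈ ball (0:ℂ) 1, 0 < (1 + (ω z) ^ 2).re := by
    intro z hz
    have h1 : Complex.abs ((ω z) ^ 2) < 1 := by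
      rw [map_pow]
      calc Complex.abs (ω z) ^ 2 ≤ Complex.abs z ^ 2 := by
            apply pow_le_pow_left₀ (Complex.abs.nonneg _) (hsch z hz)
        _ < 1 := by
            have hz1 : Complex.abs z < 1 := mem_ball_zero_iff.1 hz
            nlinarith [Complex.abs.nonneg z]
    have h2 : -Complex.abs ((ω z) ^ 2) ≤ ((ω z) ^ 2).re :=
      neg_le_of_abs_le (Complex.abs_re_le_abs _)
    have h3 : (1 + (ω z) ^ 2).re = 1 + ((ω z) ^ 2).re := by simp
    rw [h3]; linarith
  have hslit : ∀ z ∈ ball (0:ℂ) 1, (1 + (ω z) ^ 2) ∈ Complex.slitPlane := by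
    intro z hz
    rw [Complex.mem_slitPlane_iff]
    left; exact hrepos z hz
  have hne1 : ∀ z ∈ ball (0:ℂ) 1, (1 + (ω z) ^ 2) ≠ 0 :=
    fun z hz => Complex.slitPlane_ne_zero (hslit z hz)
  have hS2 : ∀ z ∈ ball (0:ℂ) 1, (S z) ^ 2 = 1 + (ω z) ^ 2 :=
    fun z hz => exp_half_log_sq (hne1 z hz)
  have hSne : ∀ z : ℂ, S z ≠ 0 := fun z => Complex.exp_ne_zero _
  have hquad : ∀ z ∈ ball (0:ℂ) 1, (W z - ω z) ^ 2 = (S z) ^ 2 := by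
    intro z hz
    rw [hS2 z hz, hωdef]
    have hw := hWne z hz
    field_simp
    ring
  set σ : ℂ → ℂ := fun z => (W z - ω z) / S z with hσdef
  have hσpm : ∀ z ∈ ball (0:ℂ) 1, σ z = 1 ∨ σ z = -1 := by
    intro z hz
    have h1 : (σ z) * (σ z) = 1 := by
      rw [hσdef]
      have : (W z - ω z) / S z * ((W z - ω z) / S z) = (W z - ω z) ^ 2 / (S z) ^ 2 := by
        ring
      rw [this, hquad z hz]
      exact div_self (pow_ne_zero 2 (hSne z))
    exact mul_self_eq_one_iff.1 h1
  have hσcont : ∀ z ∈ ball (0:ℂ) 1, ContinuousAt σ z := by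
    intro z hz
    have hWc : ContinuousAt W z :=
      (hd.continuousOn.continuousAt (isOpen_ball.mem_nhds hz))
    have hωc : ContinuousAt ω z := by
      apply ContinuousAt.div
      · exact ((hWc.pow 2).sub continuousAt_const)
      · exact continuousAt_const.mul hWc
      · exact mul_ne_zero two_ne_zero (hWne z hz)
    have hSc : ContinuousAt S z := by
      apply Complex.continuous_exp.continuousAt.comp
      apply ContinuousAt.div_const
      exact ContinuousAt.comp (f := fun z => 1 + (ω z) ^ 2) (x := z)
        (continuousAt_clog (hslit z hz)) (continuousAt_const.add (hωc.pow 2))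
    exact (hWc.sub hωc).div hSc (hSne z)
  have hσ0 : σ 0 = 1 := by
    have hb0 : (0:ℂ) ∈ ball (0:ℂ) 1 := by simp
    rw [hσdef]
    simp only [hW0, hω0, hSdef, hω0]
    norm_num [Complex.log_one]
  -- connectedness argument
  have hσall : ∀ z ∈ ball (0:ℂ) 1, σ z = 1 := by
    by_contra hcon
    push_neg at hcon
    obtain ⟨z₀, hz₀, hz₀ne⟩ := hcon
    have hz₀neg : σ z₀ = -1 := (hσpm z₀ hz₀).resolve_left hz₀ne
    set U : Set ℂ := {z | z ∈ ball (0:ℂ) 1 ∧ Complex.abs (σ z - 1) < 1} with hUdef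
    set V : Set ℂ := {z | z ∈ ball (0:ℂ) 1 ∧ Complex.abs (σ z + 1) < 1} with hVdef
    have hUopen : IsOpen U := by
      rw [isOpen_iff_mem_nhds]
      intro z hzU
      have h1 : {x : ℂ | Complex.abs (σ x - 1) < 1} ∈ nhds z := by
        have hopen : IsOpen {y : ℂ | Complex.abs (y - 1) < 1} := by
          have : {y : ℂ | Complex.abs (y - 1) < 1} = ball 1 1 := by
            ext y; simp [mem_ball, Complex.dist_eq]
          rw [this]; exact isOpen_ball
        exact (hσcont z hzU.1).preimage_mem_nhds (hopen.mem_nhds hzU.2)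
      filter_upwards [h1, isOpen_ball.mem_nhds hzU.1] with x hx1 hx2
      exact ⟨hx2, hx1⟩
    have hVopen : IsOpen V := by
      rw [isOpen_iff_mem_nhds]
      intro z hzV
      have h1 : {x : ℂ | Complex.abs (σ x + 1) < 1} ∈ nhds z := by
        have hopen : IsOpen {y : ℂ | Complex.abs (y + 1) < 1} := by
          have : {y : ℂ | Complex.abs (y + 1) < 1} = ball (-1) 1 := by
            ext y; simp [mem_ball, Complex.dist_eq, sub_neg_eq_add]
          rw [this]; exact isOpen_ball
        exact (hσcont z hzV.1).preimage_mem_nhds (hopen.mem_nhds hzV.2)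
      filter_upwards [h1, isOpen_ball.mem_nhds hzV.1] with x hx1 hx2
      exact ⟨hx2, hx1⟩
    have hpre : IsPreconnected (ball (0:ℂ) 1) := (convex_ball (0:ℂ) 1).isPreconnected
    have hsub : ball (0:ℂ) 1 ⊆ U ∪ V := by
      intro z hz
      rcases hσpm z hz with h | h
      · left; exact ⟨hz, by rw [h]; simp⟩
      · right; exact ⟨hz, by rw [h]; simp⟩
    have hUne : (ball (0:ℂ) 1 ∩ U).Nonempty := by
      refine ⟨0, by simp, by simp, ?_⟩
      rw [hσ0]; simp
    have hVne : (ball (0:ℂ) 1 ∩ V).Nonempty := by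
      refine ⟨z₀, hz₀, hz₀, ?_⟩
      rw [hz₀neg]; simp
    obtain ⟨z, hzb, hzU, hzV⟩ := hpre U V hUopen hVopen hsub hUne hVne
    rcases hσpm z hzb with h | h
    · have := hzV.2
      rw [h] at this
      norm_num at this
    · have := hzU.2
      rw [h] at this
      norm_num at this
  intro z hz
  have hWeq : W z = ω z + S z := by
    have h := hσall z hz
    rw [hσdef] at h
    have h2 : W z - ω z = S z := (div_eq_one_iff_eq (hSne z)).1 h
    linear_combination h2
  have hS1 : Complex.abs (S z - 1) ≤ Complex.abs (ω z) ^ 2 := by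
    have hre : 0 ≤ (S z).re := re_exp_half_log_nonneg _
    have habs1 : (1:ℝ) ≤ Complex.abs (S z + 1) := by
      calc (1:ℝ) ≤ (S z + 1).re := by
            rw [Complex.add_re, Complex.one_re]; linarith
        _ ≤ Complex.abs (S z + 1) := Complex.re_le_abs _
    have hprod : (S z - 1) * (S z + 1) = (ω z) ^ 2 := by
      linear_combination (hS2 z hz)
    have habsprod := congrArg Complex.abs hprod
    rw [map_mul] at habsprod
    calc Complex.abs (S z - 1)
        ≤ Complex.abs (S z - 1) * Complex.abs (S z + 1) := by
          nlinarith [Complex.abs.nonneg (S z - 1)]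
      _ = Complex.abs ((ω z) ^ 2) := habsprod
      _ = Complex.abs (ω z) ^ 2 := map_pow _ _ _
  have heq2 : W z - 1 = ω z + (S z - 1) := by rw [hWeq]; ring
  rw [heq2]
  calc Complex.abs (ω z + (S z - 1)) ≤ Complex.abs (ω z) + Complex.abs (S z - 1) :=
        Complex.abs.add_le _ _
    _ ≤ Complex.abs z + Complex.abs (ω z) ^ 2 := add_le_add (hsch z hz) hS1
    _ ≤ Complex.abs z + Complex.abs z ^ 2 := by
        have h3 : Complex.abs (ω z) ^ 2 ≤ Complex.abs z ^ 2 :=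
          pow_le_pow_left₀ (Complex.abs.nonneg _) (hsch z hz) 2
        linarith

lemma deriv_bound (β₁ β₂ : ℝ) (hβ₁ : 0 < β₁) (hβ₂ : 0 < β₂) (hββ : β₂ < β₁)
    (p : ℂ → ℂ) (hp : AnalyticOnNhd ℂ p (ball 0 1))
    (q : ℂ → ℂ)
    (hqdef : ∀ z, q z = (β₁:ℂ) * z * deriv p z + (β₂:ℂ) * z ^ 2 * deriv (deriv p) z)
    (hqb : ∀ z ∈ ball (0:ℂ) 1, Complex.abs (q z) ≤ Complex.abs z + Complex.abs z ^ 2)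
    (hqcont : ContinuousOn q (ball 0 1)) :
    ∀ z ∈ ball (0:ℂ) 1, Complex.abs (z * deriv p z) ≤
      Complex.abs z / β₁ + Complex.abs z ^ 2 / (β₁ + β₂) := by
  have hp' : AnalyticOnNhd ℂ (deriv p) (ball 0 1) := hp.deriv
  have hp'' : AnalyticOnNhd ℂ (deriv (deriv p)) (ball 0 1) := hp'.deriv
  intro z hz
  have hz1 : Complex.abs z < 1 := mem_ball_zero_iff.1 hz
  have hz0 : 0 ≤ Complex.abs z := Complex.abs.nonneg z
  set k : ℝ := β₁ / β₂ with hkdef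
  have hk1 : 1 < k := (one_lt_div hβ₂).2 hββ
  have hk0 : 0 < k := by linarith
  have hβk : β₂ * k = β₁ := by rw [hkdef]; field_simp
  have hmem : ∀ s : ℝ, 0 ≤ s → s ≤ 1 → ((s:ℂ) * z) ∈ ball (0:ℂ) 1 := by
    intro s h0 h1
    rw [mem_ball_zero_iff, norm_mul, Complex.norm_real, Real.norm_eq_abs, _root_.abs_of_nonneg h0,
      Complex.norm_eq_abs]
    nlinarith
  set G : ℝ → ℂ := fun s => ((s ^ (k-2) : ℝ) : ℂ) * q ((s:ℂ) * z) with hGdef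
  set F : ℝ → ℂ := fun s => ((s ^ k : ℝ) : ℂ) * ((β₂:ℂ) * z * deriv p ((s:ℂ) * z)) with hFdef
  -- derivative
  have hderiv : ∀ s ∈ Ioo (0:ℝ) 1, HasDerivAt F (G s) s := by
    intro s hs
    have hs0 : (0:ℝ) < s := hs.1
    have hs1 : s < 1 := hs.2
    have hszb : ((s:ℂ) * z) ∈ ball (0:ℂ) 1 := hmem s hs0.le hs1.le
    have hA : HasDerivAt (fun t : ℝ => ((t ^ k : ℝ) : ℂ)) ((k * s ^ (k-1) : ℝ) : ℂ) s :=
      (Real.hasDerivAt_rpow_const (Or.inl hs0.ne')).ofReal_comp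
    have hinner : HasDerivAt (fun t : ℝ => (t:ℂ) * z) z s := by
      simpa using ((hasDerivAt_id s).ofReal_comp.mul_const z)
    have houter : HasDerivAt (deriv p) (deriv (deriv p) ((s:ℂ) * z)) ((s:ℂ) * z) :=
      (hp' _ hszb).differentiableAt.hasDerivAt
    have hcomp : HasDerivAt (fun t : ℝ => deriv p ((t:ℂ) * z))
        (z * deriv (deriv p) ((s:ℂ) * z)) s := by
      have := HasDerivAt.scomp s houter hinner
      simpa [smul_eq_mul, Function.comp_def] using this
    have hB : HasDerivAt (fun t : ℝ => (β₂:ℂ) * z * deriv p ((t:ℂ) * z))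
        ((β₂:ℂ) * z * (z * deriv (deriv p) ((s:ℂ) * z))) s := hcomp.const_mul _
    have htot := hA.mul hB
    convert htot using 1
    case e'_4 => rfl
    case e'_8 => rfl
    -- G s = A' * B s + A s * B'
    have hre1 : s ^ (k-1) = s ^ (k-2) * s := by
      rw [show k - 1 = (k-2) + 1 by ring, Real.rpow_add hs0, Real.rpow_one]
    have hs2 : s ^ (2:ℝ) = s * s := by
      rw [Real.rpow_two]; ring
    have hre2 : s ^ k = s ^ (k-2) * (s * s) := by
      rw [← hs2, ← Real.rpow_add hs0]; norm_num
    have hβk' : (β₁:ℂ) = (β₂:ℂ) * (k:ℝ) := by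
      rw [← hβk]; push_cast; ring
    rw [hGdef]
    simp only [hqdef]
    rw [hβk', hre1, hre2]
    push_cast
    ring
  -- integrability of G
  have hGcont : ContinuousOn G (Ioc (0:ℝ) 1) := by
    intro s hs
    have h1 : ContinuousAt (fun t : ℝ => ((t ^ (k-2) : ℝ) : ℂ)) s :=
      Complex.continuous_ofReal.continuousAt.comp
        (Real.continuousAt_rpow_const s (k-2) (Or.inl hs.1.ne'))
    have h2 : ContinuousAt (fun t : ℝ => q ((t:ℂ) * z)) s := by
      have hin : ContinuousAt (fun t : ℝ => (t:ℂ) * z) s :=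
        (Complex.continuous_ofReal.continuousAt.mul continuousAt_const)
      have hszb : ((s:ℂ) * z) ∈ ball (0:ℂ) 1 := hmem s hs.1.le hs.2
      exact ContinuousAt.comp (f := fun t : ℝ => (t:ℂ) * z) (x := s)
        (hqcont.continuousAt (isOpen_ball.mem_nhds hszb)) hin
    exact (h1.mul h2).continuousWithinAt
  have hbound : ∀ s ∈ Ioc (0:ℝ) 1, ‖G s‖ ≤ Complex.abs z * s ^ (k-1) + Complex.abs z ^ 2 * s ^ k := by
    intro s hs
    have hs0 : (0:ℝ) < s := hs.1
    have hszb : ((s:ℂ) * z) ∈ ball (0:ℂ) 1 := hmem s hs0.le hs.2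
    have h1 : ‖G s‖ = s ^ (k-2) * Complex.abs (q ((s:ℂ) * z)) := by
      rw [hGdef]
      simp only [norm_mul, Complex.norm_eq_abs, Complex.abs_ofReal]
      rw [_root_.abs_of_nonneg (Real.rpow_nonneg hs0.le _)]
    have h2 : Complex.abs ((s:ℂ) * z) = s * Complex.abs z := by
      rw [map_mul, Complex.abs_ofReal, _root_.abs_of_nonneg hs0.le]
    have h3 := hqb _ hszb
    rw [h2] at h3
    have h4 : 0 ≤ s ^ (k-2) := Real.rpow_nonneg hs0.le _
    have hre1 : s ^ (k-1) = s ^ (k-2) * s := by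
      rw [show k - 1 = (k-2) + 1 by ring, Real.rpow_add hs0, Real.rpow_one]
    have hs2 : s ^ (2:ℝ) = s * s := by
      rw [Real.rpow_two]; ring
    have hre2 : s ^ k = s ^ (k-2) * (s * s) := by
      rw [← hs2, ← Real.rpow_add hs0]; norm_num
    rw [h1, hre1, hre2]
    calc s ^ (k-2) * Complex.abs (q ((s:ℂ) * z))
        ≤ s ^ (k-2) * (s * Complex.abs z + (s * Complex.abs z) ^ 2) :=
          mul_le_mul_of_nonneg_left h3 h4
      _ = Complex.abs z * (s ^ (k-2) * s) + Complex.abs z ^ 2 * (s ^ (k-2) * (s * s)) := by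
          push_cast; ring
  have hintb : IntervalIntegrable (fun s => Complex.abs z * s ^ (k-1) + Complex.abs z ^ 2 * s ^ k)
      MeasureTheory.volume 0 1 := by
    apply IntervalIntegrable.add
    · exact (intervalIntegral.intervalIntegrable_rpow' (by linarith)).const_mul _
    · exact (intervalIntegral.intervalIntegrable_rpow' (by linarith)).const_mul _
  have hint : IntervalIntegrable G MeasureTheory.volume 0 1 := by
    rw [intervalIntegrable_iff_integrableOn_Ioc_of_le (by norm_num : (0:ℝ) ≤ 1)]
    apply MeasureTheory.Integrable.mono'
      (g := fun s => Complex.abs z * s ^ (k-1) + Complex.abs z ^ 2 * s ^ k)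
    · exact (intervalIntegrable_iff_integrableOn_Ioc_of_le (by norm_num : (0:ℝ) ≤ 1)).1 hintb
    · exact hGcont.aestronglyMeasurable measurableSet_Ioc
    · filter_upwards [MeasureTheory.ae_restrict_mem measurableSet_Ioc] with s hs
      exact hbound s hs
  -- limits
  have hlim0 : Filter.Tendsto F (nhdsWithin 0 (Ioi 0)) (nhds 0) := by
    have h1 : Filter.Tendsto (fun s : ℝ => ((s ^ k : ℝ) : ℂ)) (nhdsWithin 0 (Ioi 0)) (nhds 0) := by
      have hc : ContinuousAt (fun s : ℝ => s ^ k) 0 :=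
        Real.continuousAt_rpow_const 0 k (Or.inr hk0.le)
      have h2 : Filter.Tendsto (fun s : ℝ => s ^ k) (nhdsWithin 0 (Ioi 0)) (nhds ((0:ℝ) ^ k)) :=
        hc.tendsto.mono_left nhdsWithin_le_nhds
      rw [Real.zero_rpow hk0.ne'] at h2
      have h3 := (Complex.continuous_ofReal.tendsto 0).comp h2
      simpa [Function.comp_def] using h3
    have hb0 : (0:ℂ) ∈ ball (0:ℂ) 1 := by simp
    have h2 : Filter.Tendsto (fun s : ℝ => (β₂:ℂ) * z * deriv p ((s:ℂ) * z))
        (nhdsWithin 0 (Ioi 0)) (nhds ((β₂:ℂ) * z * deriv p 0)) := by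
      have hin : ContinuousAt (fun t : ℝ => (t:ℂ) * z) 0 :=
        Complex.continuous_ofReal.continuousAt.mul continuousAt_const
      have hc : ContinuousAt (fun s : ℝ => (β₂:ℂ) * z * deriv p ((s:ℂ) * z)) 0 := by
        apply ContinuousAt.mul continuousAt_const
        have : ((0:ℝ):ℂ) * z ∈ ball (0:ℂ) 1 := by simpa using hb0
        exact ContinuousAt.comp (f := fun t : ℝ => (t:ℂ) * z) (x := (0:ℝ))
          ((hp' _ this).continuousAt) hin
      have := hc.tendsto.mono_left (nhdsWithin_le_nhds (s := Ioi (0:ℝ)))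
      simpa using this
    have := h1.mul h2
    simpa using this
  have hlim1 : Filter.Tendsto F (nhdsWithin 1 (Iio 1)) (nhds (F 1)) := by
    have hc : ContinuousAt F 1 := by
      apply ContinuousAt.mul
      · exact Complex.continuous_ofReal.continuousAt.comp
          (Real.continuousAt_rpow_const 1 k (Or.inl one_ne_zero))
      · apply ContinuousAt.mul continuousAt_const
        have hin : ContinuousAt (fun t : ℝ => (t:ℂ) * z) 1 :=
          Complex.continuous_ofReal.continuousAt.mul continuousAt_const
        have h1z : ((1:ℝ):ℂ) * z ∈ ball (0:ℂ) 1 := hmem 1 zero_le_one le_rfl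
        exact ContinuousAt.comp (f := fun t : ℝ => (t:ℂ) * z) (x := (1:ℝ))
          ((hp' _ h1z).continuousAt) hin
    exact hc.tendsto.mono_left nhdsWithin_le_nhds
  have heq := intervalIntegral.integral_eq_sub_of_hasDerivAt_of_tendsto
    (by norm_num : (0:ℝ) < 1) hderiv hint hlim0 hlim1
  have hF1 : F 1 = (β₂:ℂ) * (z * deriv p z) := by
    rw [hFdef]
    simp [Real.one_rpow]
    ring
  have hNI : ‖∫ s in (0:ℝ)..1, G s‖ ≤
      |∫ s in (0:ℝ)..1, (Complex.abs z * s ^ (k-1) + Complex.abs z ^ 2 * s ^ k)| := by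
    apply (intervalIntegral.norm_integral_le_of_norm_le (by norm_num) _ hintb).trans (le_abs_self _)
    exact Filter.Eventually.of_forall (fun s hs => hbound s hs)
  have hval : ∫ s in (0:ℝ)..1, (Complex.abs z * s ^ (k-1) + Complex.abs z ^ 2 * s ^ k)
      = Complex.abs z * (1/k) + Complex.abs z ^ 2 * (1/(k+1)) := by
    rw [intervalIntegral.integral_add
      ((intervalIntegral.intervalIntegrable_rpow' (by linarith)).const_mul _)
      ((intervalIntegral.intervalIntegrable_rpow' (by linarith)).const_mul _)]
    rw [intervalIntegral.integral_const_mul, intervalIntegral.integral_const_mul]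
    rw [integral_rpow (Or.inl (by linarith : (-1:ℝ) < k - 1)),
        integral_rpow (Or.inl (by linarith : (-1:ℝ) < k))]
    have e1 : k - 1 + 1 = k := by ring
    rw [e1, Real.one_rpow, Real.one_rpow, Real.zero_rpow hk0.ne',
        Real.zero_rpow (by linarith : k + 1 ≠ 0)]
    ring
  have hfinal : β₂ * Complex.abs (z * deriv p z)
      ≤ Complex.abs z * (1/k) + Complex.abs z ^ 2 * (1/(k+1)) := by
    have h0 : β₂ * Complex.abs (z * deriv p z) = ‖F 1 - 0‖ := by
      rw [sub_zero, hF1, norm_mul, Complex.norm_real, Real.norm_eq_abs,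
        _root_.abs_of_nonneg hβ₂.le, Complex.norm_eq_abs]
    have hnn : 0 ≤ Complex.abs z * (1/k) + Complex.abs z ^ 2 * (1/(k+1)) := by
      have h1k : (0:ℝ) ≤ 1/k := by positivity
      have h1k1 : (0:ℝ) ≤ 1/(k+1) := by positivity
      positivity
    calc β₂ * Complex.abs (z * deriv p z) = ‖F 1 - 0‖ := h0
      _ = ‖∫ s in (0:ℝ)..1, G s‖ := by rw [heq]
      _ ≤ |∫ s in (0:ℝ)..1, (Complex.abs z * s ^ (k-1) + Complex.abs z ^ 2 * s ^ k)| := hNI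
      _ = Complex.abs z * (1/k) + Complex.abs z ^ 2 * (1/(k+1)) := by
          rw [hval, _root_.abs_of_nonneg hnn]
  have e2 : Complex.abs z * (1/k) + Complex.abs z ^ 2 * (1/(k+1))
      = β₂ * (Complex.abs z / β₁ + Complex.abs z ^ 2 / (β₁ + β₂)) := by
    rw [hkdef]
    have hβ₁β₂ : β₁ + β₂ ≠ 0 := by positivity
    field_simp
  rw [e2] at hfinal
  exact le_of_mul_le_mul_left hfinal hβ₂

lemma p_bound (β₁ β₂ : ℝ) (hβ₁ : 0 < β₁) (hβ₂ : 0 < β₂)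
    (p : ℂ → ℂ) (hp : AnalyticOnNhd ℂ p (ball 0 1)) (hp0 : p 0 = 1)
    (hu : ∀ z ∈ ball (0:ℂ) 1, Complex.abs (z * deriv p z) ≤
      Complex.abs z / β₁ + Complex.abs z ^ 2 / (β₁ + β₂)) :
    ∀ z ∈ ball (0:ℂ) 1, Complex.abs (p z - 1) ≤ 3/(2*β₁) * Complex.abs z := by
  have hp' : AnalyticOnNhd ℂ (deriv p) (ball 0 1) := hp.deriv
  intro z hz
  have hz1 : Complex.abs z < 1 := mem_ball_zero_iff.1 hz
  have hz0 : 0 ≤ Complex.abs z := Complex.abs.nonneg z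
  have hmem : ∀ s : ℝ, 0 ≤ s → s ≤ 1 → ((s:ℂ) * z) ∈ ball (0:ℂ) 1 := by
    intro s h0 h1
    rw [mem_ball_zero_iff, norm_mul, Complex.norm_real, Real.norm_eq_abs,
      _root_.abs_of_nonneg h0, Complex.norm_eq_abs]
    nlinarith
  have hG : ∀ t ∈ Set.uIcc (0:ℝ) 1,
      HasDerivAt (fun t : ℝ => p ((t:ℂ) * z)) (z * deriv p ((t:ℂ) * z)) t := by
    intro t ht
    rw [Set.uIcc_of_le (by norm_num : (0:ℝ) ≤ 1)] at ht
    have htzb : ((t:ℂ) * z) ∈ ball (0:ℂ) 1 := hmem t ht.1 ht.2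
    have hinner : HasDerivAt (fun t : ℝ => (t:ℂ) * z) z t := by
      simpa using ((hasDerivAt_id t).ofReal_comp.mul_const z)
    have houter : HasDerivAt p (deriv p ((t:ℂ) * z)) ((t:ℂ) * z) :=
      (hp _ htzb).differentiableAt.hasDerivAt
    have := HasDerivAt.scomp t houter hinner
    simpa [smul_eq_mul, mul_comm, Function.comp_def] using this
  have hcont : ContinuousOn (fun t : ℝ => z * deriv p ((t:ℂ) * z)) (Set.uIcc (0:ℝ) 1) := by
    intro t ht
    rw [Set.uIcc_of_le (by norm_num : (0:ℝ) ≤ 1)] at ht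
    have htzb : ((t:ℂ) * z) ∈ ball (0:ℂ) 1 := hmem t ht.1 ht.2
    have hin : ContinuousAt (fun t : ℝ => (t:ℂ) * z) t :=
      Complex.continuous_ofReal.continuousAt.mul continuousAt_const
    exact (continuousAt_const.mul (ContinuousAt.comp (f := fun t : ℝ => (t:ℂ) * z) (x := t)
      ((hp' _ htzb).continuousAt) hin)).continuousWithinAt
  have hii : IntervalIntegrable (fun t : ℝ => z * deriv p ((t:ℂ) * z))
      MeasureTheory.volume 0 1 := hcont.intervalIntegrable
  have heq := intervalIntegral.integral_eq_sub_of_hasDerivAt hG hii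
  have heq2 : ∫ t in (0:ℝ)..1, z * deriv p ((t:ℂ) * z) = p z - 1 := by
    rw [heq]
    have e0 : ((0:ℝ):ℂ) * z = 0 := by norm_num
    have e1 : ((1:ℝ):ℂ) * z = z := by norm_num
    rw [e0, e1, hp0]
  set B : ℝ := Complex.abs z ^ 2 / (β₁ + β₂) with hBdef
  have hBnn : 0 ≤ B := by positivity
  have hbnd : ∀ t ∈ Set.uIoc (0:ℝ) 1,
      ‖z * deriv p ((t:ℂ) * z)‖ ≤ Complex.abs z / β₁ + t * B := by
    intro t ht
    rw [Set.uIoc_of_le (by norm_num : (0:ℝ) ≤ 1)] at ht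
    have ht0 : 0 < t := ht.1
    have htzb : ((t:ℂ) * z) ∈ ball (0:ℂ) 1 := hmem t ht0.le ht.2
    have hut := hu _ htzb
    have habs : Complex.abs ((t:ℂ) * z) = t * Complex.abs z := by
      rw [map_mul, Complex.abs_ofReal, _root_.abs_of_nonneg ht0.le]
    rw [habs] at hut
    have hsplit : Complex.abs ((t:ℂ) * z * deriv p ((t:ℂ) * z))
        = t * Complex.abs (z * deriv p ((t:ℂ) * z)) := by
      have : (t:ℂ) * z * deriv p ((t:ℂ) * z) = (t:ℂ) * (z * deriv p ((t:ℂ) * z)) := by ring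
      rw [this, map_mul, Complex.abs_ofReal, _root_.abs_of_nonneg ht0.le]
    rw [hsplit] at hut
    have hexp : (t * Complex.abs z) / β₁ + (t * Complex.abs z) ^ 2 / (β₁ + β₂)
        = t * (Complex.abs z / β₁ + t * B) := by
      rw [hBdef]; ring
    rw [hexp] at hut
    have := le_of_mul_le_mul_left (by linarith [hut] : t * Complex.abs (z * deriv p ((t:ℂ)*z)) ≤ t * (Complex.abs z / β₁ + t * B)) ht0
    exact this
  have hcB : IntervalIntegrable (fun t : ℝ => t * B) MeasureTheory.volume 0 1 :=
    (by continuity : Continuous fun t : ℝ => t * B).intervalIntegrable 0 1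
  have hgii : IntervalIntegrable (fun t : ℝ => Complex.abs z / β₁ + t * B)
      MeasureTheory.volume 0 1 := intervalIntegrable_const.add hcB
  have hNI := intervalIntegral.norm_integral_le_of_norm_le
    (μ := MeasureTheory.volume) (f := fun t : ℝ => z * deriv p ((t:ℂ) * z))
    (g := fun t : ℝ => Complex.abs z / β₁ + t * B) (a := 0) (b := 1)
    (by norm_num) (Filter.Eventually.of_forall fun t ht =>
      hbnd t (by rwa [Set.uIoc_of_le (by norm_num : (0:ℝ) ≤ 1)])) hgii
  have hval : ∫ t in (0:ℝ)..1, (Complex.abs z / β₁ + t * B) = Complex.abs z / β₁ + B / 2 := by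
    rw [intervalIntegral.integral_add (intervalIntegrable_const) hcB]
    rw [intervalIntegral.integral_const]
    have : ∫ t in (0:ℝ)..1, t * B = (∫ t in (0:ℝ)..1, t) * B := by
      rw [← intervalIntegral.integral_mul_const]
    rw [this, integral_id]
    norm_num
    ring
  rw [heq2] at hNI
  have hnn2 : 0 ≤ Complex.abs z / β₁ + B / 2 := by positivity
  rw [hval] at hNI
  have hle2 : B / 2 ≤ Complex.abs z / (2 * β₁) := by
    rw [hBdef, div_div]
    rw [div_le_div_iff₀ (by positivity) (by positivity)]
    have h1 : Complex.abs z ^ 2 ≤ Complex.abs z := by nlinarith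
    nlinarith [mul_nonneg hz0 hβ₂.le]
  calc Complex.abs (p z - 1) ≤ Complex.abs z / β₁ + B / 2 := hNI
    _ ≤ Complex.abs z / β₁ + Complex.abs z / (2*β₁) := by linarith
    _ = 3/(2*β₁) * Complex.abs z := by field_simp; ring

noncomputable def nu0 : ℝ := Real.sqrt (1 - Real.sin 1 ^ 2)

noncomputable def nu1 : ℝ := -Real.sin 2 / (1 + Real.cos 2)

theorem stmt3 (β₁ β₂ : ℝ) (hβ₁ : 0 < β₁) (hβ₂ : 0 < β₂)
    (hcond : nu0 * (β₁ + β₂ * nu1) ≥ Real.sqrt 2)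
    (p : ℂ → ℂ) (hp : AnalyticOnNhd ℂ p (ball 0 1)) (hp0 : p 0 = 1)
    (hsub : ∀ z ∈ ball (0 : ℂ) 1,
      ‖(1 + (β₁ : ℂ) * z * deriv p z + (β₂ : ℂ) * z ^ 2 * deriv (deriv p) z) ^ 2 - 1‖ < 2 * ‖1 + (β₁ : ℂ) * z * deriv p z + (β₂ : ℂ) * z ^ 2 * deriv (deriv p) z‖) :
    ∀ z ∈ ball (0 : ℂ) 1, ∃ w ∈ ball (0 : ℂ) 1, p z = 1 + Complex.sin w := by
  -- numerical facts
  have hc1 : 0 < Real.cos 1 := Real.cos_one_pos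
  have hc2 : Real.cos 1 ≤ 2/3 := Real.cos_one_le.trans (by norm_num)
  have hs1 : Real.cos 1 ≤ Real.sin 1 := by
    have hb := Real.sin_bound (x := 1) (by norm_num)
    rw [abs_le] at hb
    have h1 : (1:ℝ) - 1^3/6 - |(1:ℝ)|^4 * (5/96) ≤ Real.sin 1 := by linarith [hb.1]
    norm_num at h1
    linarith
  have hsin1pos : 0 < Real.sin 1 := lt_of_lt_of_le hc1 hs1
  have hnu0 : nu0 = Real.cos 1 := by
    rw [nu0]
    have h : 1 - Real.sin 1 ^ 2 = Real.cos 1 ^ 2 := by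
      have := Real.sin_sq_add_cos_sq 1; linarith
    rw [h, Real.sqrt_sq hc1.le]
  have hnu1 : nu1 = -(Real.sin 1 / Real.cos 1) := by
    rw [nu1]
    have hsin2 : Real.sin 2 = 2 * Real.sin 1 * Real.cos 1 := by
      have := Real.sin_two_mul 1; norm_num at this; exact this
    have hcos2 : 1 + Real.cos 2 = 2 * Real.cos 1 ^ 2 := by
      have := Real.cos_two_mul 1; norm_num at this; rw [this]; ring
    rw [hsin2, hcos2]
    field_simp
  have hβcos : Real.sqrt 2 + β₂ * Real.sin 1 ≤ β₁ * Real.cos 1 := by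
    rw [hnu0, hnu1] at hcond
    have heq : Real.cos 1 * (β₁ + β₂ * -(Real.sin 1 / Real.cos 1))
        = β₁ * Real.cos 1 - β₂ * Real.sin 1 := by
      field_simp
      ring
    rw [heq] at hcond
    linarith
  have h2pos : 0 < Real.sqrt 2 := by positivity
  have hββ : β₂ < β₁ := by nlinarith
  have hβ32 : 3 / (2*β₁) ≤ Real.sqrt 2 / 2 := by
    have hsq2 : Real.sqrt 2 ^ 2 = 2 := Real.sq_sqrt (by norm_num)
    have h1 : (3:ℝ)/2 * Real.sqrt 2 ≤ β₁ := by nlinarith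
    rw [div_le_div_iff₀ (by positivity) (by norm_num)]
    nlinarith
  -- analytic setup
  set q : ℂ → ℂ := fun z => (β₁:ℂ) * z * deriv p z + (β₂:ℂ) * z ^ 2 * deriv (deriv p) z
    with hqdef
  have hqa : AnalyticOnNhd ℂ q (ball 0 1) := by
    intro z hz
    exact ((analyticAt_const.mul analyticAt_id).mul (hp.deriv z hz)).add
      ((analyticAt_const.mul (analyticAt_id.pow 2)).mul (hp.deriv.deriv z hz))
  have hqcont : ContinuousOn q (ball 0 1) := fun z hz =>
    (hqa z hz).continuousAt.continuousWithinAt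
  set Wf : ℂ → ℂ := fun z => 1 + q z with hWdef
  have hWdiff : DifferentiableOn ℂ Wf (ball 0 1) := fun z hz =>
    ((analyticAt_const.add (hqa z hz)).differentiableAt).differentiableWithinAt
  have hW0 : Wf 0 = 1 := by
    rw [hWdef]
    simp [hqdef]
  have hlune : ∀ z ∈ ball (0:ℂ) 1,
      Complex.abs ((Wf z) ^ 2 - 1) < 2 * Complex.abs (Wf z) := by
    intro z hz
    have h := hsub z hz
    have e : Wf z = 1 + (β₁:ℂ) * z * deriv p z + (β₂:ℂ) * z ^ 2 * deriv (deriv p) z := by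
      rw [hWdef, hqdef]; ring
    rw [e]
    exact h
  have hqb : ∀ z ∈ ball (0:ℂ) 1, Complex.abs (q z) ≤ Complex.abs z + Complex.abs z ^ 2 := by
    intro z hz
    have h := lune_bound hWdiff hW0 hlune z hz
    have e : Wf z - 1 = q z := by rw [hWdef]; ring
    rwa [e] at h
  have hu := deriv_bound β₁ β₂ hβ₁ hβ₂ hββ p hp q (fun z => rfl) hqb hqcont
  have hpb := p_bound β₁ β₂ hβ₁ hβ₂ p hp hp0 hu
  intro z hz
  have hz1 : Complex.abs z < 1 := mem_ball_zero_iff.1 hz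
  have h32 : 0 < 3/(2*β₁) := by positivity
  have hlt : Complex.abs (p z - 1) < Real.sqrt 2 / 2 := by
    calc Complex.abs (p z - 1) ≤ 3/(2*β₁) * Complex.abs z := hpb z hz
      _ < 3/(2*β₁) * 1 := mul_lt_mul_of_pos_left hz1 h32
      _ = 3/(2*β₁) := mul_one _
      _ ≤ Real.sqrt 2 / 2 := hβ32
  obtain ⟨w, hw, hsw⟩ := sin_onto hlt
  exact ⟨w, hw, by rw [hsw]; ring⟩
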